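/- Let N = (L_1, M_1), …, (L_r, M_r) (r ≥ 1) be a special convenient integral Newton-polygon datum satisfying conditions (R1)–(R3). Set β_0 := 1 + ht(N) and β_k := L^{(k−1)}_1/M^{(k−1)}_1 for k = 1, …, r, let n_k := gcd(β_0, …, β_{k−1})/gcd(β_0, …, β_k), and define β̄_0 := β_0, β̄_1 := β_1, and β̄_{k+1} := n_k·β̄_k + β_{k+1} − β_k for 1 ≤ k ≤ r−1 (Zariski's formula for the minimal semigroup generators attached to a Puiseux characteristic). Then the Merle datum of (β̄_0, …, β̄_r), namely the sequence ((n_k − 1)·β̄_k, n_1⋯n_{k−1}·(n_k − 1)) for k = 1, …, r, is equal to N. -/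

import Mathlib

/-- A canonical Newton-polygon datum with `r` edges: a pair of `1`-indexed sequences
`(L, M)` of positive rationals with strictly increasing inclinations `L k / M k`. -/
def IsCanonicalNP (p : (ℕ → ℚ) × (ℕ → ℚ)) (r : ℕ) : Prop :=
  (∀ k, 1 ≤ k → k ≤ r → 0 < p.1 k ∧ 0 < p.2 k) ∧
  ∀ k, 1 ≤ k → k < r → p.1 k / p.2 k < p.1 (k + 1) / p.2 (k + 1)

/-- An integral datum: all the entries are positive integers. -/
def IsIntegralNP (p : (ℕ → ℚ) × (ℕ → ℚ)) (r : ℕ) : Prop :=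
  ∀ k, 1 ≤ k → k ≤ r →
    (∃ a : ℕ, 0 < a ∧ p.1 k = a) ∧ (∃ b : ℕ, 0 < b ∧ p.2 k = b)

/-- A special datum: all the inclinations are greater than `1`. -/
def IsSpecialNP (p : (ℕ → ℚ) × (ℕ → ℚ)) (r : ℕ) : Prop :=
  ∀ k, 1 ≤ k → k ≤ r → 1 < p.1 k / p.2 k

/-- The height `ht(N) = M_1 + ⋯ + M_r` of a Newton-polygon datum with `r` edges. -/
def htNP (p : (ℕ → ℚ) × (ℕ → ℚ)) (r : ℕ) : ℚ := ∑ k ∈ Finset.Icc 1 r, p.2 k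

/-- The reduction `R(N)`, with `L'_i = L_{i+1} − (L_1/(1+M_1))·M_{i+1}` and
`M'_i = M_{i+1}/(1+M_1)`; its iterates give `R^i(N)` via `redNP^[i] p`. -/
def redNP (p : (ℕ → ℚ) × (ℕ → ℚ)) : (ℕ → ℚ) × (ℕ → ℚ) :=
  (fun i => p.1 (i + 1) - (p.1 1 / (1 + p.2 1)) * p.2 (i + 1),
   fun i => p.2 (i + 1) / (1 + p.2 1))

/-- Condition (R1): `1 + ht(N) < L_1/M_1`. -/
def CondR1 (p : (ℕ → ℚ) × (ℕ → ℚ)) (r : ℕ) : Prop :=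
  1 + htNP p r < p.1 1 / p.2 1

/-- Condition (R2): for `0 ≤ i ≤ r−1`, all entries of `R^i(N)` are integers and
`L^{(i)}_1/M^{(i)}_1` is a (natural) integer. -/
def CondR2 (p : (ℕ → ℚ) × (ℕ → ℚ)) (r : ℕ) : Prop :=
  ∀ i, i ≤ r - 1 →
    (∀ k, 1 ≤ k → k ≤ r - i →
      (∃ a : ℤ, (redNP^[i] p).1 k = a) ∧ (∃ b : ℤ, (redNP^[i] p).2 k = b)) ∧
    ∃ a : ℕ, (redNP^[i] p).1 1 / (redNP^[i] p).2 1 = a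

/-- Condition (R3): for `0 ≤ i ≤ r−1`,
`(1 + M^{(i)}_1)·gcd(L^{(i)}_1/M^{(i)}_1, 1 + ht(R^i(N))) = 1 + ht(R^i(N))`
(the gcd of the two integer-valued rationals being taken via their numerators). -/
def CondR3 (p : (ℕ → ℚ) × (ℕ → ℚ)) (r : ℕ) : Prop :=
  ∀ i, i ≤ r - 1 →
    (1 + (redNP^[i] p).2 1) *
      (Nat.gcd ((redNP^[i] p).1 1 / (redNP^[i] p).2 1).num.natAbs
        (1 + htNP (redNP^[i] p) (r - i)).num.natAbs : ℚ)
    = 1 + htNP (redNP^[i] p) (r - i)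

/-- Auxiliary sum used in the proof: `S_i = ∑_{j=1}^i β_j (n_j - 1) / (n_1 ⋯ n_j)`. -/
def Saux (β n : ℕ → ℕ) (i : ℕ) : ℚ :=
  ∑ j ∈ Finset.Icc 1 i, (β j : ℚ) * ((n j : ℚ) - 1) / ∏ t ∈ Finset.Icc 1 j, (n t : ℚ)

lemma ht_red_aux (s : (ℕ → ℚ) × (ℕ → ℚ)) (m : ℕ) (hm : 1 ≤ m) (hs : (0:ℚ) < 1 + s.2 1) :
    1 + htNP (redNP s) (m - 1) = (1 + htNP s m) / (1 + s.2 1) := by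
  have h0 : (1:ℚ) + s.2 1 ≠ 0 := ne_of_gt hs
  have h1 : htNP (redNP s) (m-1) = (∑ k ∈ Finset.Icc 1 (m-1), s.2 (k+1)) / (1 + s.2 1) := by
    simp only [htNP, redNP]
    rw [← Finset.sum_div]
  have h2 : ∑ k ∈ Finset.Icc 1 (m-1), s.2 (k+1) = ∑ k ∈ Finset.Icc 2 m, s.2 k := by
    have h : Finset.Icc 2 m = (Finset.Icc 1 (m-1)).map (addRightEmbedding 1) := by
      rw [Finset.map_add_right_Icc]; congr 1 <;> omega
    rw [h, Finset.sum_map]; rfl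
  have h3 : htNP s m = s.2 1 + ∑ k ∈ Finset.Icc 2 m, s.2 k := by
    have h : Finset.Icc 1 m = insert 1 (Finset.Icc 2 m) := by
      ext x; simp only [Finset.mem_Icc, Finset.mem_insert]; omega
    simp only [htNP]
    rw [h, Finset.sum_insert (by simp)]
  rw [h1, h2, h3]
  field_simp
  ring

/-- For a special convenient integral Newton-polygon datum `N` with
`r ≥ 1` edges satisfying (R1)–(R3), set `β_0 := 1 + ht(N)`,
`β_k := L^{(k−1)}_1/M^{(k−1)}_1`, `n_k := gcd(β_0,…,β_{k−1})/gcd(β_0,…,β_k)`, and define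
`β̄_0 := β_0`, `β̄_1 := β_1`, `β̄_{k+1} := n_k·β̄_k + β_{k+1} − β_k` (Zariski's formula).
Then the Merle datum of `(β̄_0, …, β̄_r)`, namely the sequence
`((n_k − 1)·β̄_k, n_1⋯n_{k−1}·(n_k − 1))` for `k = 1, …, r`, equals `N`. -/
theorem reduction_merle_datum_eq
    (p : (ℕ → ℚ) × (ℕ → ℚ)) (r : ℕ) (hr : 1 ≤ r)
    (hc : IsCanonicalNP p r) (hi : IsIntegralNP p r) (hs : IsSpecialNP p r)
    (h1 : CondR1 p r) (h2 : CondR2 p r) (h3 : CondR3 p r)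
    (β : ℕ → ℕ)
    (hβ0 : (β 0 : ℚ) = 1 + htNP p r)
    (hβ : ∀ k, 1 ≤ k → k ≤ r →
      (β k : ℚ) = (redNP^[k - 1] p).1 1 / (redNP^[k - 1] p).2 1)
    (n : ℕ → ℕ)
    (hn : ∀ k, 1 ≤ k → k ≤ r →
      n k = (Finset.range k).gcd β / (Finset.range (k + 1)).gcd β)
    (bb : ℕ → ℕ)
    (hbb0 : bb 0 = β 0) (hbb1 : bb 1 = β 1)
    (hbbrec : ∀ k, 1 ≤ k → k ≤ r - 1 →
      (bb (k + 1) : ℤ) = n k * bb k + β (k + 1) - β k) :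
    ∀ k, 1 ≤ k → k ≤ r →
      ((n k : ℚ) - 1) * bb k = p.1 k ∧
      ((∏ j ∈ Finset.Icc 1 (k - 1), n j : ℕ) : ℚ) * ((n k : ℚ) - 1) = p.2 k := by
  -- positivity of the M-entries of all iterates
  have hpos : ∀ i k, 1 ≤ k → i + k ≤ r → 0 < (redNP^[i] p).2 k := by
    intro i
    induction i with
    | zero =>
      intro k hk1 hkr
      simpa using (hc.1 k hk1 (by omega)).2
    | succ i ih =>
      intro k hk1 hkr
      rw [Function.iterate_succ_apply']
      show 0 < (redNP^[i] p).2 (k+1) / (1 + (redNP^[i] p).2 1)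
      exact div_pos (ih (k+1) (by omega) (by omega))
        (by linarith [ih 1 le_rfl (by omega)])
  have hhtpos : ∀ i, i ≤ r → (0:ℚ) < 1 + htNP (redNP^[i] p) (r - i) := by
    intro i hi
    have h0 : (0:ℚ) ≤ htNP (redNP^[i] p) (r - i) := by
      apply Finset.sum_nonneg
      intro k hk
      rcases Finset.mem_Icc.mp hk with ⟨hk1, hk2⟩
      exact le_of_lt (hpos i k hk1 (by omega))
    linarith
  -- height recursion
  have hht : ∀ i, i < r →
      1 + htNP (redNP^[i+1] p) (r - (i+1))
        = (1 + htNP (redNP^[i] p) (r - i)) / (1 + (redNP^[i] p).2 1) := by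
    intro i hi
    have h := ht_red_aux (redNP^[i] p) (r - i) (by omega)
      (by linarith [hpos i 1 le_rfl (by omega)])
    rw [Function.iterate_succ_apply', show r - (i+1) = r - i - 1 from by omega]
    exact h
  -- the gcd chain equals 1 + ht of the iterates
  have hE : ∀ i, i ≤ r → (((Finset.range (i+1)).gcd β : ℕ) : ℚ) = 1 + htNP (redNP^[i] p) (r - i) := by
    intro i
    induction i with
    | zero => intro _; simpa using hβ0
    | succ i ih =>
      intro hle
      have hir : i < r := by omega
      have hEi := ih (by omega)
      have hgcd : (Finset.range (i+2)).gcd β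
          = Nat.gcd (β (i+1)) ((Finset.range (i+1)).gcd β) := by
        rw [Finset.range_add_one, Finset.gcd_insert]; rfl
      have h3' := h3 i (by omega)
      have hbi : ((redNP^[i] p).1 1 / (redNP^[i] p).2 1) = ((β (i+1) : ℕ) : ℚ) := by
        have h := hβ (i+1) (by omega) (by omega)
        simp only [Nat.add_sub_cancel] at h
        exact h.symm
      rw [hbi, ← hEi] at h3'
      simp only [Rat.num_natCast, Int.natAbs_natCast] at h3'
      have hc1 : (0:ℚ) < 1 + (redNP^[i] p).2 1 := by
        linarith [hpos i 1 le_rfl (by omega)]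
      rw [hht i hir, ← hEi, hgcd, eq_div_iff (ne_of_gt hc1)]
      linarith [h3']
  -- n k = 1 + M^(k-1)_1
  have hn' : ∀ k, 1 ≤ k → k ≤ r → (n k : ℚ) = 1 + (redNP^[k-1] p).2 1 := by
    intro k hk1 hkr
    obtain ⟨m, rfl⟩ : ∃ m, k = m + 1 := ⟨k - 1, by omega⟩
    simp only [Nat.add_sub_cancel]
    have hEm := hE m (by omega)
    have hEm1 := hE (m+1) (by omega)
    have hdvd : (Finset.range (m+2)).gcd β ∣ (Finset.range (m+1)).gcd β := by
      rw [Finset.range_add_one, Finset.gcd_insert]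
      exact gcd_dvd_right _ _
    have hne : (((Finset.range (m+2)).gcd β : ℕ) : ℚ) ≠ 0 := by
      rw [show m + 2 = (m+1) + 1 from rfl, hEm1]
      exact ne_of_gt (hhtpos (m+1) (by omega))
    rw [hn (m+1) (by omega) (by omega)]
    rw [Nat.cast_div hdvd hne, hEm1, hEm, hht m (by omega)]
    have ha : (0:ℚ) < 1 + htNP (redNP^[m] p) (r - m) := hhtpos m (by omega)
    have hc1 : (0:ℚ) < 1 + (redNP^[m] p).2 1 := by
      linarith [hpos m 1 le_rfl (by omega)]
    rw [div_div_eq_mul_div, mul_comm, mul_div_assoc, div_self (ne_of_gt ha), mul_one]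
  -- products of n's are positive
  have hprodpos : ∀ m, m ≤ r → (0:ℚ) < ∏ j ∈ Finset.Icc 1 m, (n j : ℚ) := by
    intro m hm
    apply Finset.prod_pos
    intro j hj
    rcases Finset.mem_Icc.mp hj with ⟨hj1, hj2⟩
    rw [hn' j hj1 (by omega)]
    linarith [hpos (j-1) 1 le_rfl (by omega)]
  -- the M-entries of the iterates
  have hM : ∀ i k, 1 ≤ k → i + k ≤ r →
      (∏ j ∈ Finset.Icc 1 i, (n j : ℚ)) * (redNP^[i] p).2 k = p.2 (i+k) := by
    intro i
    induction i with
    | zero => intro k hk1 hkr; simp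
    | succ i ih =>
      intro k hk1 hkr
      have e2 : (redNP^[i+1] p).2 k = (redNP^[i] p).2 (k+1) / (1 + (redNP^[i] p).2 1) := by
        rw [Function.iterate_succ_apply']; rfl
      have hnv : (n (i+1) : ℚ) = 1 + (redNP^[i] p).2 1 := by
        have h := hn' (i+1) (by omega) (by omega)
        simpa using h
      have hc1 : (0:ℚ) < 1 + (redNP^[i] p).2 1 := by
        linarith [hpos i 1 le_rfl (by omega)]
      have hprev := ih (k+1) (by omega) (by omega)
      rw [Finset.prod_Icc_succ_top (by omega : 1 ≤ i + 1), e2, hnv,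
        show i + 1 + k = i + (k+1) from by omega, ← hprev]
      field_simp
  -- the L-entries of the iterates
  have hL : ∀ i k, 1 ≤ k → i + k ≤ r →
      p.1 (i+k) = (redNP^[i] p).1 k + p.2 (i+k) * Saux β n i := by
    intro i
    induction i with
    | zero => intro k hk1 hkr; simp [Saux]
    | succ i ih =>
      intro k hk1 hkr
      have e1 : (redNP^[i+1] p).1 k
          = (redNP^[i] p).1 (k+1)
            - ((redNP^[i] p).1 1 / (1 + (redNP^[i] p).2 1)) * (redNP^[i] p).2 (k+1) := by
        rw [Function.iterate_succ_apply']; rfl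
      have e2 : (redNP^[i+1] p).2 k = (redNP^[i] p).2 (k+1) / (1 + (redNP^[i] p).2 1) := by
        rw [Function.iterate_succ_apply']; rfl
      have hnv : (n (i+1) : ℚ) = 1 + (redNP^[i] p).2 1 := by
        have h := hn' (i+1) (by omega) (by omega)
        simpa using h
      have hc1 : (0:ℚ) < 1 + (redNP^[i] p).2 1 := by
        linarith [hpos i 1 le_rfl (by omega)]
      have hA21 : 0 < (redNP^[i] p).2 1 := hpos i 1 le_rfl (by omega)
      have hb : (β (i+1) : ℚ) = (redNP^[i] p).1 1 / (redNP^[i] p).2 1 := by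
        have h := hβ (i+1) (by omega) (by omega)
        simpa using h
      have hA11 : (redNP^[i] p).1 1 = (β (i+1) : ℚ) * (redNP^[i] p).2 1 := by
        rw [hb, div_mul_cancel₀ _ (ne_of_gt hA21)]
      have hSstep : Saux β n (i+1)
          = Saux β n i + (β (i+1) : ℚ) * ((n (i+1) : ℚ) - 1)
              / ∏ t ∈ Finset.Icc 1 (i+1), (n t : ℚ) := by
        simp only [Saux]
        exact Finset.sum_Icc_succ_top (by omega) _
      have hMv : (∏ j ∈ Finset.Icc 1 (i+1), (n j : ℚ)) * (redNP^[i+1] p).2 k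
          = p.2 (i+1+k) := hM (i+1) k hk1 hkr
      have hP : (0:ℚ) < ∏ j ∈ Finset.Icc 1 (i+1), (n j : ℚ) := hprodpos (i+1) (by omega)
      have key : p.2 (i+1+k) * (Saux β n (i+1) - Saux β n i)
          = ((redNP^[i] p).1 1 / (1 + (redNP^[i] p).2 1)) * (redNP^[i] p).2 (k+1) := by
        rw [hSstep, ← hMv, e2, hA11, hnv]
        field_simp
        ring
      have hiter := ih (k+1) (by omega) (by omega)
      rw [show i + (k+1) = i + 1 + k from by omega] at hiter
      rw [e1]
      linarith [key, hiter]
  -- the formula for the semigroup generators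
  have hBB : ∀ m, m ≤ r - 1 →
      (bb (m+1) : ℚ) = (β (m+1) : ℚ) + (∏ j ∈ Finset.Icc 1 m, (n j : ℚ)) * Saux β n m := by
    intro m
    induction m with
    | zero => intro _; simp [Saux, hbb1]
    | succ m ih =>
      intro hle
      have ihm := ih (by omega)
      have hrec : (bb (m+2) : ℚ)
          = (n (m+1) : ℚ) * bb (m+1) + (β (m+2) : ℚ) - β (m+1) := by
        have h := hbbrec (m+1) (by omega) (by omega)
        exact_mod_cast congrArg (fun x : ℤ => (x : ℚ)) h
      have hSstep : Saux β n (m+1)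
          = Saux β n m + (β (m+1) : ℚ) * ((n (m+1) : ℚ) - 1)
              / ∏ t ∈ Finset.Icc 1 (m+1), (n t : ℚ) := by
        simp only [Saux]
        exact Finset.sum_Icc_succ_top (by omega) _
      have hP : (0:ℚ) < ∏ j ∈ Finset.Icc 1 (m+1), (n j : ℚ) := hprodpos (m+1) (by omega)
      rw [show m + 1 + 1 = m + 2 from rfl, hrec, ihm, hSstep,
        Finset.prod_Icc_succ_top (by omega : 1 ≤ m + 1)]
      rw [Finset.prod_Icc_succ_top (by omega : 1 ≤ m + 1)] at hP
      have hPne := mul_ne_zero_iff.mp hP.ne'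
      have hA := hPne.1
      have hB := hPne.2
      field_simp
      ring
  -- conclusion
  intro k hk1 hkr
  have hnk := hn' k hk1 hkr
  have hM1 : (∏ j ∈ Finset.Icc 1 (k-1), (n j : ℚ)) * (redNP^[k-1] p).2 1 = p.2 k := by
    have h := hM (k-1) 1 le_rfl (by omega)
    rwa [show k - 1 + 1 = k from by omega] at h
  have hM21 : (redNP^[k-1] p).2 1 = (n k : ℚ) - 1 := by rw [hnk]; ring
  constructor
  · have hL1 : p.1 k = (redNP^[k-1] p).1 1 + p.2 k * Saux β n (k-1) := by
      have h := hL (k-1) 1 le_rfl (by omega)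
      rwa [show k - 1 + 1 = k from by omega] at h
    have hbbk : (bb k : ℚ)
        = (β k : ℚ) + (∏ j ∈ Finset.Icc 1 (k-1), (n j : ℚ)) * Saux β n (k-1) := by
      have h := hBB (k-1) (by omega)
      rwa [show k - 1 + 1 = k from by omega] at h
    have hA21 : 0 < (redNP^[k-1] p).2 1 := hpos (k-1) 1 le_rfl (by omega)
    have hA11 : (redNP^[k-1] p).1 1 = (β k : ℚ) * (redNP^[k-1] p).2 1 := by
      rw [hβ k hk1 hkr, div_mul_cancel₀ _ (ne_of_gt hA21)]
    rw [hbbk, hL1, hA11, ← hM1, hM21]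
    ring
  · push_cast
    rw [← hM1, hM21]
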